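/- arXiv:1801.00561 — 5 statements merged into one kernel-verified Lean document; each statement's English description precedes it below -/
import Mathlib

section
/- Let $F : \mathcal{H} \to \mathcal{H}$ be monotone, let $x^k, y^k \in \mathcal{H}$ with $x^k \neq y^k$, $\alpha_k > 0$, $\mu \in (0,1)$ with $\alpha_k \|F(x^k) - F(y^k)\| \leq \mu \|x^k - y^k\|$. Define $d(x^k, y^k) = (x^k - y^k) - \alpha_k(F(x^k) - F(y^k))$ and $\rho_k = \langle x^k - y^k, d(x^k, y^k)\rangle / \|d(x^k, y^k)\|^2$. Then $\rho_k \geq (1 - \mu)/(1 + \mu^2)$. -/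
open scoped RealInnerProductSpace

theorem rho_lower_bound
    {H : Type*} [NormedAddCommGroup H] [InnerProductSpace ℝ H]
    (F : H → H) (hmono : ∀ x y : H, ⟪F x - F y, x - y⟫ ≥ 0)
    (xk yk : H) (hxy : xk ≠ yk)
    (αk μ : ℝ) (hα : 0 < αk) (hμ0 : 0 < μ) (hμ1 : μ < 1)
    (hstep : αk * ‖F xk - F yk‖ ≤ μ * ‖xk - yk‖)
    (d : H) (hd : d = (xk - yk) - αk • (F xk - F yk))
    (ρk : ℝ) (hρ : ρk = ⟪xk - yk, d⟫ / ‖d‖ ^ 2) :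
    ρk ≥ (1 - μ) / (1 + μ ^ 2) := by
  set u : H := xk - yk with hu
  set v : H := αk • (F xk - F yk) with hv
  have hu0 : u ≠ 0 := sub_ne_zero.mpr hxy
  have hun : (0:ℝ) < ‖u‖ := norm_pos_iff.mpr hu0
  have hvle : ‖v‖ ≤ μ * ‖u‖ := by
    rw [hv, norm_smul, Real.norm_eq_abs, abs_of_pos hα]
    exact hstep
  have huv0 : (0:ℝ) ≤ ⟪u, v⟫ := by
    rw [hv, real_inner_smul_right]
    have := hmono xk yk
    have h2 : ⟪u, F xk - F yk⟫ = ⟪F xk - F yk, xk - yk⟫ := by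
      rw [real_inner_comm]
    rw [h2]
    positivity
  have hnum : (1 - μ) * ‖u‖^2 ≤ ⟪u, d⟫ := by
    rw [hd, inner_sub_right, real_inner_self_eq_norm_sq]
    have habs : ⟪u, v⟫ ≤ ‖u‖ * ‖v‖ := real_inner_le_norm u v
    have : ⟪u, v⟫ ≤ ‖u‖ * (μ * ‖u‖) :=
      habs.trans (by nlinarith)
    nlinarith
  have hden : ‖d‖^2 ≤ (1 + μ^2) * ‖u‖^2 := by
    have hexp : ‖d‖^2 = ‖u‖^2 - 2 * ⟪u, v⟫ + ‖v‖^2 := by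
      rw [hd, ← real_inner_self_eq_norm_sq, ← real_inner_self_eq_norm_sq,
        ← real_inner_self_eq_norm_sq, inner_sub_sub_self, real_inner_comm v u]
      ring
    have hv2 : ‖v‖^2 ≤ μ^2 * ‖u‖^2 := by nlinarith [norm_nonneg v]
    nlinarith
  have hdpos : (0:ℝ) < ‖d‖^2 := by
    have hu2 : (0:ℝ) < ‖u‖^2 := by positivity
    have h1 : (0:ℝ) < (1 - μ) * ‖u‖^2 := by nlinarith
    have h2 : (0:ℝ) < ⟪u, d⟫ := lt_of_lt_of_le h1 hnum
    have hd0 : d ≠ 0 := by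
      intro h
      rw [h, inner_zero_right] at h2
      exact lt_irrefl 0 h2
    exact pow_pos (norm_pos_iff.mpr hd0) 2
  rw [hρ, ge_iff_le, div_le_div_iff₀ (by positivity) hdpos]
  have : (1 - μ) * ‖d‖^2 ≤ (1 - μ) * ((1 + μ^2) * ‖u‖^2) := by nlinarith
  nlinarith
end

section
/- (Fejér monotonicity of the modified subgradient extragradient iterates.) Under the same assumptions as the contraction inequality, and additionally assuming the stepsize condition $\alpha_k \|F(x^k) - F(y^k)\| \leq \mu \|x^k - y^k\|$ with $\mu \in (0,1)$, the next iterate satisfies $\|x^{k+1} - x^*\|^2 \leq \|x^k - x^*\|^2 - \frac{\gamma(2-\gamma)(1-\mu)^3}{1+\mu^2} \|x^k - y^k\|^2$; in particular $\|x^{k+1} - x^*\| \leq \|x^k - x^*\|$. -/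
open scoped RealInnerProductSpace

/-- Variational characterization of a metric projection onto a convex set. -/
lemma proj_char {H : Type*} [NormedAddCommGroup H] [InnerProductSpace ℝ H]
    {K : Set H} (hK : Convex ℝ K) {u v : H} (hv : v ∈ K)
    (hmin : ∀ z ∈ K, ‖u - v‖ ≤ ‖u - z‖) : ∀ w ∈ K, ⟪u - v, w - v⟫ ≤ 0 := by
  letI : Nonempty K := ⟨⟨v, hv⟩⟩
  rw [← norm_eq_iInf_iff_real_inner_le_zero hK hv]
  refine le_antisymm (le_ciInf fun w => hmin w w.2) ?_
  have hbdd : BddBelow (Set.range fun w : K => ‖u - ↑w‖) := by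
    refine ⟨0, ?_⟩
    rintro x ⟨w, rfl⟩
    exact norm_nonneg _
  exact ciInf_le hbdd ⟨v, hv⟩

set_option maxHeartbeats 1000000 in
theorem fejer_monotonicity
    {H : Type*} [NormedAddCommGroup H] [InnerProductSpace ℝ H] [CompleteSpace H]
    (C : Set H) (hne : C.Nonempty) (hclosed : IsClosed C) (hconv : Convex ℝ C)
    (F : H → H) (hmono : ∀ x y : H, ⟪F x - F y, x - y⟫ ≥ 0)
    (xstar : H) (hxstarC : xstar ∈ C)
    (hVI : ∀ x ∈ C, ⟪F xstar, x - xstar⟫ ≥ 0)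
    (xk : H) (αk μ : ℝ) (hα : 0 < αk) (hμ0 : 0 < μ) (hμ1 : μ < 1)
    (yk : H) (hykC : yk ∈ C) (hxy : xk ≠ yk)
    (hykproj : ∀ z ∈ C, ‖(xk - αk • F xk) - yk‖ ≤ ‖(xk - αk • F xk) - z‖)
    (hstep : αk * ‖F xk - F yk‖ ≤ μ * ‖xk - yk‖)
    (Tk : Set H) (hTk : Tk = {w : H | ⟪(xk - αk • F xk) - yk, w - yk⟫ ≤ 0})
    (dk : H) (hdk : dk = (xk - yk) - αk • (F xk - F yk))
    (ρk : ℝ) (hρ : ρk = ⟪xk - yk, dk⟫ / ‖dk‖ ^ 2)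
    (γ : ℝ) (hγ0 : 0 < γ) (hγ2 : γ < 2)
    (xk1 : H) (hxk1T : xk1 ∈ Tk)
    (hxk1proj : ∀ z ∈ Tk, ‖(xk - (γ * ρk * αk) • F yk) - xk1‖ ≤ ‖(xk - (γ * ρk * αk) • F yk) - z‖) :
    ‖xk1 - xstar‖ ^ 2 ≤ ‖xk - xstar‖ ^ 2
      - (γ * (2 - γ) * (1 - μ) ^ 3 / (1 + μ ^ 2)) * ‖xk - yk‖ ^ 2
    ∧ ‖xk1 - xstar‖ ≤ ‖xk - xstar‖ := by
  set a : H := (xk - αk • F xk) - yk with ha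
  set c : ℝ := γ * ρk * αk with hc
  set u : H := xk - c • F yk with hu
  -- basic scalar facts
  have hS : (0:ℝ) < ‖xk - yk‖ := by
    rw [norm_pos_iff]; exact sub_ne_zero_of_ne hxy
  have hS2 : (0:ℝ) < ‖xk - yk‖ ^ 2 := by positivity
  have hCS : ⟪xk - yk, F xk - F yk⟫ ≤ ‖xk - yk‖ * ‖F xk - F yk‖ := real_inner_le_norm _ _
  have hmono' : (0:ℝ) ≤ ⟪xk - yk, F xk - F yk⟫ := by
    have := hmono xk yk; rw [real_inner_comm]; linarith
  have hstep2 : αk * ⟪xk - yk, F xk - F yk⟫ ≤ μ * ‖xk - yk‖ ^ 2 := by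
    nlinarith [mul_le_mul_of_nonneg_right hstep (norm_nonneg (xk - yk))]
  have hI : (1 - μ) * ‖xk - yk‖ ^ 2 ≤ ⟪xk - yk, dk⟫ := by
    rw [hdk, inner_sub_right, real_inner_smul_right, real_inner_self_eq_norm_sq]
    linarith
  have hIpos : (0:ℝ) < ⟪xk - yk, dk⟫ := lt_of_lt_of_le (mul_pos (by linarith) hS2) hI
  have hdne : dk ≠ 0 := by
    intro h; rw [h, inner_zero_right] at hIpos; linarith
  have hdn2 : (0:ℝ) < ‖dk‖ ^ 2 := pow_pos (norm_pos_iff.mpr hdne) 2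
  have hD : ‖dk‖ ^ 2 ≤ (1 + μ ^ 2) * ‖xk - yk‖ ^ 2 := by
    have hstepsq : (αk * ‖F xk - F yk‖) ^ 2 ≤ (μ * ‖xk - yk‖) ^ 2 :=
      pow_le_pow_left₀ (by positivity) hstep 2
    rw [hdk, norm_sub_sq_real, real_inner_smul_right, norm_smul, Real.norm_eq_abs,
      abs_of_pos hα]
    nlinarith [mul_nonneg hα.le hmono']
  have hρI : ρk * ‖dk‖ ^ 2 = ⟪xk - yk, dk⟫ := by
    rw [hρ, div_mul_cancel₀ _ (ne_of_gt hdn2)]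
  have hρpos : (0:ℝ) < ρk := by
    rw [hρ]; exact div_pos hIpos hdn2
  have hρlb : 1 - μ ≤ ρk * (1 + μ ^ 2) := by
    have h1 : ρk * ‖dk‖ ^ 2 ≤ ρk * ((1 + μ ^ 2) * ‖xk - yk‖ ^ 2) :=
      mul_le_mul_of_nonneg_left hD hρpos.le
    nlinarith
  -- projection characterizations
  have hTconv : Convex ℝ Tk := by
    rw [hTk]
    intro x hx y hy s t hs ht hst
    simp only [Set.mem_setOf_eq] at hx hy ⊢
    have hdecomp : s • x + t • y - yk = s • (x - yk) + t • (y - yk) := by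
      have h9 : s • (x - yk) + t • (y - yk) = s • x + t • y - (s + t) • yk := by
        rw [smul_sub, smul_sub, add_smul]; abel
      rw [h9, hst, one_smul]
    rw [hdecomp, inner_add_right, real_inner_smul_right, real_inner_smul_right]
    have := mul_nonpos_of_nonneg_of_nonpos hs hx
    have := mul_nonpos_of_nonneg_of_nonpos ht hy
    linarith
  have hxstarT : xstar ∈ Tk := by
    rw [hTk]
    exact proj_char hconv hykC hykproj xstar hxstarC
  have hxk1Tk : ⟪a, xk1 - yk⟫ ≤ 0 := by
    rw [hTk] at hxk1T; exact hxk1T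
  have h1 : ⟪u - xk1, xstar - xk1⟫ ≤ 0 :=
    proj_char hTconv hxk1T hxk1proj xstar hxstarT
  -- contraction chain
  have hA : ‖xk1 - xstar‖ ^ 2 ≤ ‖u - xstar‖ ^ 2 - ‖u - xk1‖ ^ 2 := by
    have hd : u - xstar = (u - xk1) + (xk1 - xstar) := by abel
    have hexp : ‖u - xstar‖ ^ 2
        = ‖u - xk1‖ ^ 2 + 2 * ⟪u - xk1, xk1 - xstar⟫ + ‖xk1 - xstar‖ ^ 2 := by
      rw [hd, norm_add_sq_real]
    have h1' : 0 ≤ ⟪u - xk1, xk1 - xstar⟫ := by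
      have hneg : xk1 - xstar = -(xstar - xk1) := by abel
      rw [hneg, inner_neg_right]; linarith
    linarith
  have hexpu1 : ‖u - xstar‖ ^ 2
      = ‖xk - xstar‖ ^ 2 - 2 * c * ⟪xk - xstar, F yk⟫ + c ^ 2 * ‖F yk‖ ^ 2 := by
    have hd : u - xstar = (xk - xstar) - c • F yk := by rw [hu]; abel
    rw [hd, norm_sub_sq_real, real_inner_smul_right, norm_smul, Real.norm_eq_abs,
      mul_pow, sq_abs]
    ring
  have hexpu2 : ‖u - xk1‖ ^ 2
      = ‖xk - xk1‖ ^ 2 - 2 * c * ⟪xk - xk1, F yk⟫ + c ^ 2 * ‖F yk‖ ^ 2 := by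
    have hd : u - xk1 = (xk - xk1) - c • F yk := by rw [hu]; abel
    rw [hd, norm_sub_sq_real, real_inner_smul_right, norm_smul, Real.norm_eq_abs,
      mul_pow, sq_abs]
    ring
  have hsub : ⟪xk - xstar, F yk⟫ - ⟪xk - xk1, F yk⟫ = ⟪xk1 - xstar, F yk⟫ := by
    rw [← inner_sub_left]
    congr 1
    abel
  have hstar : ⟪xk1 - yk, F yk⟫ ≤ ⟪xk1 - xstar, F yk⟫ := by
    have h2 : (0:ℝ) ≤ ⟪F yk - F xstar, yk - xstar⟫ := hmono yk xstar
    have h3 : (0:ℝ) ≤ ⟪F xstar, yk - xstar⟫ := hVI yk hykC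
    have h4 : ⟪xk1 - xstar, F yk⟫ - ⟪xk1 - yk, F yk⟫ = ⟪yk - xstar, F yk⟫ := by
      rw [← inner_sub_left]; congr 1; abel
    have h5 : ⟪yk - xstar, F yk⟫
        = ⟪F yk - F xstar, yk - xstar⟫ + ⟪F xstar, yk - xstar⟫ := by
      rw [← inner_add_left, sub_add_cancel, real_inner_comm]
    linarith
  have hdineq : ⟪xk1 - yk, dk⟫ ≤ αk * ⟪xk1 - yk, F yk⟫ := by
    have hda : dk = a + αk • F yk := by
      rw [hdk, ha, smul_sub]; abel
    have h0 : ⟪xk1 - yk, a⟫ ≤ 0 := by rw [real_inner_comm]; exact hxk1Tk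
    rw [hda, inner_add_right, real_inner_smul_right]
    linarith
  have hsplit : ⟪xk1 - yk, dk⟫ = ⟪xk1 - xk, dk⟫ + ⟪xk - yk, dk⟫ := by
    rw [← inner_add_left]; congr 1; abel
  have hflip : ⟪xk1 - xk, dk⟫ = -⟪xk - xk1, dk⟫ := by
    rw [← inner_neg_left]; congr 1; abel
  have hAMGM : 2 * (γ * ρk) * ⟪xk - xk1, dk⟫ ≤ ‖xk - xk1‖ ^ 2 + (γ * ρk) ^ 2 * ‖dk‖ ^ 2 := by
    have h0 : (0:ℝ) ≤ ‖(xk - xk1) - (γ * ρk) • dk‖ ^ 2 := sq_nonneg _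
    rw [norm_sub_sq_real, real_inner_smul_right, norm_smul, Real.norm_eq_abs,
      mul_pow, sq_abs] at h0
    linarith
  have hγρ : (0:ℝ) < γ * ρk := mul_pos hγ0 hρpos
  have hc0 : (0:ℝ) < c := by rw [hc]; exact mul_pos hγρ hα
  -- assemble contraction inequality
  have hcontr : ‖xk1 - xstar‖ ^ 2
      ≤ ‖xk - xstar‖ ^ 2 - γ * (2 - γ) * (ρk ^ 2 * ‖dk‖ ^ 2) := by
    have key1 : ⟪xk1 - yk, F yk⟫ ≤ ⟪xk1 - xstar, F yk⟫ := hstar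
    have key2 : c * ⟪xk1 - yk, F yk⟫ ≥ (γ * ρk) * ⟪xk1 - yk, dk⟫ := by
      have := mul_le_mul_of_nonneg_left hdineq hγρ.le
      calc (γ * ρk) * ⟪xk1 - yk, dk⟫ ≤ (γ * ρk) * (αk * ⟪xk1 - yk, F yk⟫) := this
        _ = c * ⟪xk1 - yk, F yk⟫ := by rw [hc]; ring
    have key3 : ⟪xk1 - yk, dk⟫ = -⟪xk - xk1, dk⟫ + ρk * ‖dk‖ ^ 2 := by
      rw [hsplit, hflip, hρI]
    have key4 : c * ⟪xk1 - xstar, F yk⟫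
        ≥ (γ * ρk) * (-⟪xk - xk1, dk⟫ + ρk * ‖dk‖ ^ 2) := by
      have := mul_le_mul_of_nonneg_left key1 hc0.le
      rw [key3] at key2
      linarith
    have hc_sub : c * ⟪xk - xstar, F yk⟫ - c * ⟪xk - xk1, F yk⟫
        = c * ⟪xk1 - xstar, F yk⟫ := by rw [← mul_sub, hsub]
    linarith [hA, hexpu1, hexpu2, hc_sub, hAMGM, key4]
  -- final bound on the decrease term
  have hμ2 : (0:ℝ) < 1 + μ ^ 2 := by positivity
  have hK : γ * (2 - γ) * (1 - μ) ^ 3 / (1 + μ ^ 2) * ‖xk - yk‖ ^ 2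
      ≤ γ * (2 - γ) * (ρk ^ 2 * ‖dk‖ ^ 2) := by
    rw [div_mul_eq_mul_div, div_le_iff₀ hμ2]
    have hqq : ρk ^ 2 * ‖dk‖ ^ 2 = ρk * ⟪xk - yk, dk⟫ := by
      rw [← hρI]; ring
    have hγγ : (0:ℝ) < γ * (2 - γ) := mul_pos hγ0 (by linarith)
    have h6 : (1 - μ) * ((1 - μ) * ‖xk - yk‖ ^ 2)
        ≤ (ρk * (1 + μ ^ 2)) * ⟪xk - yk, dk⟫ := by
      have := mul_le_mul hρlb hI (by nlinarith) (by nlinarith)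
      linarith
    have h7 : (1 - μ) ^ 3 * ‖xk - yk‖ ^ 2 ≤ (1 - μ) ^ 2 * ‖xk - yk‖ ^ 2 := by
      nlinarith [mul_nonneg (mul_nonneg hμ0.le (sq_nonneg (1 - μ))) hS2.le]
    rw [hqq]
    linarith [mul_le_mul_of_nonneg_left h6 hγγ.le, mul_le_mul_of_nonneg_left h7 hγγ.le]
  have hfirst : ‖xk1 - xstar‖ ^ 2 ≤ ‖xk - xstar‖ ^ 2
      - (γ * (2 - γ) * (1 - μ) ^ 3 / (1 + μ ^ 2)) * ‖xk - yk‖ ^ 2 := by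
    linarith
  refine ⟨hfirst, ?_⟩
  have hterm : (0:ℝ) ≤ (γ * (2 - γ) * (1 - μ) ^ 3 / (1 + μ ^ 2)) * ‖xk - yk‖ ^ 2 := by
    have h8 : (0:ℝ) < γ * (2 - γ) * (1 - μ) ^ 3 / (1 + μ ^ 2) := by
      apply div_pos _ hμ2
      exact mul_pos (mul_pos hγ0 (by linarith)) (pow_pos (by linarith) 3)
    exact mul_nonneg h8.le (by positivity)
  have hsq : ‖xk1 - xstar‖ ^ 2 ≤ ‖xk - xstar‖ ^ 2 := by linarith
  exact (pow_le_pow_iff_left₀ (norm_nonneg _) (norm_nonneg _) two_ne_zero).mp hsq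
end

section
/- Under the setting of the contraction inequality, with $x^{k+1} = P_{T_k}(x^k - \gamma\rho_k\alpha_k F(y^k))$ and $x^* \in C$ solving the VI, the following cross-term bound holds: $-2\gamma\rho_k\alpha_k \langle x^{k+1} - x^*, F(y^k)\rangle \leq -2\gamma\rho_k \langle x^{k+1} - y^k, d_k\rangle$, where $d_k = (x^k - y^k) - \alpha_k(F(x^k) - F(y^k))$. -/
open scoped RealInnerProductSpace

theorem cross_term_bound
    {H : Type*} [NormedAddCommGroup H] [InnerProductSpace ℝ H] [CompleteSpace H]
    (C : Set H) (hne : C.Nonempty) (hclosed : IsClosed C) (hconv : Convex ℝ C)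
    (F : H → H) (hmono : ∀ x y : H, ⟪F x - F y, x - y⟫ ≥ 0)
    (xstar : H) (hxstarC : xstar ∈ C)
    (hVI : ∀ x ∈ C, ⟪F xstar, x - xstar⟫ ≥ 0)
    (γ ρk αk : ℝ) (hγ : 0 < γ) (hρ : 0 < ρk) (hα : 0 < αk)
    (xk yk : H) (hykC : yk ∈ C)
    (hykproj : ∀ z ∈ C, ‖(xk - αk • F xk) - yk‖ ≤ ‖(xk - αk • F xk) - z‖)
    (Tk : Set H) (hTk : Tk = {w : H | ⟪(xk - αk • F xk) - yk, w - yk⟫ ≤ 0})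
    (dk : H) (hdk : dk = (xk - yk) - αk • (F xk - F yk))
    (xk1 : H) (hxk1T : xk1 ∈ Tk) :
    -(2 * γ * ρk * αk) * ⟪xk1 - xstar, F yk⟫ ≤ -(2 * γ * ρk) * ⟪xk1 - yk, dk⟫ := by
  -- monotonicity + VI give ⟪F yk, yk - xstar⟫ ≥ 0
  have h1 : (0 : ℝ) ≤ ⟪F yk, yk - xstar⟫ := by
    have hm := hmono yk xstar
    have hv := hVI yk hykC
    have : ⟪F yk - F xstar, yk - xstar⟫ + ⟪F xstar, yk - xstar⟫ = ⟪F yk, yk - xstar⟫ := by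
      rw [inner_sub_left]; ring
    linarith [hm, hv, this]
  -- membership in Tk
  have h2 : ⟪(xk - αk • F xk) - yk, xk1 - yk⟫ ≤ 0 := by
    rw [hTk] at hxk1T; exact hxk1T
  have hrw : (xk - αk • F xk) - yk = dk - αk • F yk := by
    rw [hdk, smul_sub]; abel
  rw [hrw, inner_sub_left, real_inner_smul_left] at h2
  -- ⟪dk, xk1 - yk⟫ ≤ αk * ⟪F yk, xk1 - yk⟫ ≤ αk * ⟪F yk, xk1 - xstar⟫
  have h3 : ⟪F yk, xk1 - xstar⟫ - ⟪F yk, xk1 - yk⟫ = ⟪F yk, yk - xstar⟫ := by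
    rw [← inner_sub_right]; congr 1; abel
  have hsymm1 : ⟪xk1 - xstar, F yk⟫ = ⟪F yk, xk1 - xstar⟫ := real_inner_comm _ _
  have hsymm2 : ⟪xk1 - yk, dk⟫ = ⟪dk, xk1 - yk⟫ := real_inner_comm _ _
  rw [hsymm1, hsymm2]
  nlinarith [mul_pos (mul_pos hγ hρ) hα, mul_pos hγ hρ]
end

section
/- (Weak convergence of the modified subgradient extragradient method.) Let $C \subseteq \mathcal{H}$ be nonempty closed convex, $F : \mathcal{H} \to \mathcal{H}$ monotone and $L$-Lipschitz continuous, with nonempty VI solution set. Let $\gamma \in (0,2)$, $\mu \in (0,1)$, and generate for all $k$: $y^k = P_C(x^k - \alpha_k F(x^k))$ with stepsizes $\alpha_k \in [\underline{\alpha}, \sigma]$ ($\underline{\alpha} > 0$) satisfying $\alpha_k\|F(x^k) - F(y^k)\| \leq \mu\|x^k - y^k\|$ and $x^k \neq y^k$; $T_k = \{w : \langle (x^k - \alpha_k F(x^k)) - y^k, w - y^k\rangle \leq 0\}$; $d_k = (x^k - y^k) - \alpha_k(F(x^k) - F(y^k))$; $\rho_k = \langle x^k - y^k, d_k\rangle/\|d_k\|^2$;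 $x^{k+1} = P_{T_k}(x^k - \gamma\rho_k\alpha_k F(y^k))$. Then $\{x^k\}$ converges weakly to a solution of the variational inequality. -/
open scoped RealInnerProductSpace Topology
open Filter

set_option maxHeartbeats 1600000

section Aux

lemma msem_mcp_frequently {f : ℕ → ℝ} {c ε : ℝ} (h : MapClusterPt c atTop f) (hε : 0 < ε) :
    ∃ᶠ n in atTop, |f n - c| < ε := by
  have := mapClusterPt_iff_frequently.1 h (Metric.ball c ε) (Metric.ball_mem_nhds _ hε)
  simpa [Real.dist_eq] using this

lemma msem_ev {g : ℕ → ℝ} {c' ε : ℝ} (hg : Tendsto g atTop (𝓝 c')) (hε : 0 < ε) :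
    ∀ᶠ n in atTop, |g n - c'| < ε := by
  have := hg (Metric.ball_mem_nhds c' hε)
  simpa [Filter.mem_map, Metric.mem_ball, Real.dist_eq, Filter.eventually_iff] using this

lemma msem_mcp_of_freq {f : ℕ → ℝ} {c : ℝ} (h : ∀ ε > 0, ∃ᶠ n in atTop, |f n - c| < ε) :
    MapClusterPt c atTop f := by
  rw [Metric.nhds_basis_ball.mapClusterPt_iff_frequently]
  intro ε hε
  simpa [Real.dist_eq] using h ε hε

lemma msem_mcp_add {f g : ℕ → ℝ} {c c' : ℝ} (hf : MapClusterPt c atTop f)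
    (hg : Tendsto g atTop (𝓝 c')) : MapClusterPt (c + c') atTop (fun n => f n + g n) := by
  apply msem_mcp_of_freq
  intro ε hε
  have h1 := msem_mcp_frequently hf (half_pos hε)
  have h2 := msem_ev hg (half_pos hε)
  refine (h1.and_eventually h2).mono ?_
  rintro n ⟨hn1, hn2⟩
  have : f n + g n - (c + c') = (f n - c) + (g n - c') := by ring
  rw [this]
  calc |(f n - c) + (g n - c')| ≤ |f n - c| + |g n - c'| := abs_add_le _ _
    _ < ε := by linarith

lemma msem_mcp_neg {f : ℕ → ℝ} {c : ℝ} (hf : MapClusterPt c atTop f) :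
    MapClusterPt (-c) atTop (fun n => -f n) :=
  hf.continuousAt_comp (continuous_neg.continuousAt)

lemma msem_mcp_eq_of_tendsto {f : ℕ → ℝ} {c c' : ℝ} (h : MapClusterPt c atTop f)
    (h' : Tendsto f atTop (𝓝 c')) : c = c' := by
  by_contra hne
  have hd : 0 < |c - c'| / 2 := by
    have : 0 < |c - c'| := abs_pos.2 (sub_ne_zero.2 hne)
    linarith
  obtain ⟨n, hn1, hn2⟩ := ((msem_mcp_frequently h hd).and_eventually (msem_ev h' hd)).exists
  have h3 : |c - c'| ≤ |c - f n| + |f n - c'| := abs_sub_le _ _ _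
  have h4 : |c - f n| = |f n - c| := abs_sub_comm _ _
  linarith

lemma msem_mcp_nonneg {f ε : ℕ → ℝ} {c : ℝ} (h : MapClusterPt c atTop f)
    (hfe : ∀ᶠ n in atTop, -ε n ≤ f n) (hε : Tendsto ε atTop (𝓝 0)) : 0 ≤ c := by
  by_contra hc
  push_neg at hc
  have h1 := msem_mcp_frequently h (show (0:ℝ) < -c / 2 by linarith)
  have h2 : ∀ᶠ n in atTop, |ε n - 0| < -c / 2 := msem_ev hε (by linarith)
  obtain ⟨n, hn1, hn2, hn3⟩ := (h1.and_eventually (h2.and hfe)).exists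
  rw [abs_lt] at hn1
  rw [sub_zero, abs_lt] at hn2
  linarith

variable {H : Type*} [NormedAddCommGroup H] [InnerProductSpace ℝ H] [CompleteSpace H]

lemma msem_weak_cluster {z : ℕ → H} {R : ℝ} (hR : ∀ n, ‖z n‖ ≤ R) :
    ∃ q : H, ∀ u : H, MapClusterPt ⟪q, u⟫ atTop (fun n => ⟪z n, u⟫) := by
  set g : ℕ → WeakDual ℝ H := fun n => StrongDual.toWeakDual (InnerProductSpace.toDual ℝ H (z n)) with hg
  set S : Set (WeakDual ℝ H) := WeakDual.toStrongDual ⁻¹' Metric.closedBall 0 R with hS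
  have hcomp : IsCompact S := WeakDual.isCompact_closedBall (𝕜 := ℝ) (E := H) 0 R
  have hmem : ∀ n, g n ∈ S := by
    intro n
    simp only [hS, Set.mem_preimage, Metric.mem_closedBall, dist_zero_right]
    calc ‖WeakDual.toStrongDual (g n)‖ = ‖z n‖ := by
          simp [hg]
      _ ≤ R := hR n
  obtain ⟨φ, hφS, hφ⟩ := hcomp.exists_mapClusterPt (f := atTop) (u := g)
    (le_principal_iff.2 (Filter.mem_map.2 (Filter.Eventually.of_forall hmem)))
  refine ⟨(InnerProductSpace.toDual ℝ H).symm (WeakDual.toStrongDual φ), fun u => ?_⟩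
  have he : ContinuousAt (fun ψ : WeakDual ℝ H => ψ u) φ := (WeakDual.eval_continuous u).continuousAt
  have h2 := hφ.continuousAt_comp he
  have hq : ⟪(InnerProductSpace.toDual ℝ H).symm (WeakDual.toStrongDual φ), u⟫ = φ u := by
    rw [← InnerProductSpace.toDual_apply_apply]
    simp
  rw [hq]
  convert h2 using 1
  rfl

lemma msem_expand {u w f : H} {g : ℝ} :
    ‖(u - g • f) - w‖ ^ 2 = ‖u - w‖ ^ 2 - 2 * (g * ⟪u - w, f⟫) + g ^ 2 * ‖f‖ ^ 2 := by
  have e : (u - g • f) - w = (u - w) - g • f := by abel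
  rw [e, norm_sub_sq_real, real_inner_smul_right, norm_smul, mul_pow, Real.norm_eq_abs, sq_abs]

lemma msem_proj_char {K : Set H} (hK : Convex ℝ K) {u v : H} (hv : v ∈ K)
    (hmin : ∀ w ∈ K, ‖u - v‖ ≤ ‖u - w‖) : ∀ w ∈ K, ⟪u - v, w - v⟫ ≤ 0 := by
  apply (norm_eq_iInf_iff_real_inner_le_zero hK hv).1
  haveI : Nonempty K := ⟨⟨v, hv⟩⟩
  apply le_antisymm
  · exact le_ciInf fun w => hmin w w.2
  · have hbdd : BddBelow (Set.range fun w : K => ‖u - (w : H)‖) := by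
      refine ⟨0, ?_⟩
      rintro _ ⟨w, rfl⟩
      exact norm_nonneg _
    exact ciInf_le hbdd ⟨v, hv⟩

end Aux
theorem MSEM_weak_convergence
    {H : Type*} [NormedAddCommGroup H] [InnerProductSpace ℝ H] [CompleteSpace H]
    (C : Set H) (hne : C.Nonempty) (hclosed : IsClosed C) (hconv : Convex ℝ C)
    (F : H → H) (hmono : ∀ x y : H, ⟪F x - F y, x - y⟫ ≥ 0)
    (L : ℝ) (hL : 0 < L) (hLip : ∀ x y : H, ‖F x - F y‖ ≤ L * ‖x - y‖)
    (hsol : ∃ z ∈ C, ∀ x ∈ C, ⟪F z, x - z⟫ ≥ 0)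
    (γ μ σ αlow : ℝ) (hγ0 : 0 < γ) (hγ2 : γ < 2) (hμ0 : 0 < μ) (hμ1 : μ < 1)
    (hαlow : 0 < αlow)
    (x y : ℕ → H) (α : ℕ → ℝ)
    (hαbd : ∀ k, αlow ≤ α k ∧ α k ≤ σ)
    (hyC : ∀ k, y k ∈ C)
    (hyproj : ∀ k, ∀ z ∈ C,
      ‖(x k - α k • F (x k)) - y k‖ ≤ ‖(x k - α k • F (x k)) - z‖)
    (hstep : ∀ k, α k * ‖F (x k) - F (y k)‖ ≤ μ * ‖x k - y k‖)
    (hxy : ∀ k, x k ≠ y k)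
    (T : ℕ → Set H)
    (hT : ∀ k, T k = {w : H | ⟪(x k - α k • F (x k)) - y k, w - y k⟫ ≤ 0})
    (d : ℕ → H) (hd : ∀ k, d k = (x k - y k) - α k • (F (x k) - F (y k)))
    (ρ : ℕ → ℝ) (hρ : ∀ k, ρ k = ⟪x k - y k, d k⟫ / ‖d k‖ ^ 2)
    (hx1T : ∀ k, x (k + 1) ∈ T k)
    (hx1proj : ∀ k, ∀ z ∈ T k,
      ‖(x k - (γ * ρ k * α k) • F (y k)) - x (k + 1)‖ ≤
        ‖(x k - (γ * ρ k * α k) • F (y k)) - z‖) :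
    ∃ p : H, p ∈ C ∧ (∀ w ∈ C, ⟪F p, w - p⟫ ≥ 0) ∧
      ∀ u : H, Filter.Tendsto (fun k => ⟪x k, u⟫) Filter.atTop (𝓝 ⟪p, u⟫) := by
  classical
  obtain ⟨z0, hz0C, hz0⟩ := hsol
  have hα0 : ∀ k, 0 < α k := fun k => lt_of_lt_of_le hαlow (hαbd k).1
  have ht0 : ∀ k, 0 < ‖x k - y k‖ := fun k => by
    rw [norm_pos_iff]; exact sub_ne_zero.2 (hxy k)
  have hCproj : ∀ k, ∀ w ∈ C, ⟪(x k - α k • F (x k)) - y k, w - y k⟫ ≤ 0 := fun k =>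
    msem_proj_char hconv (hyC k) (hyproj k)
  -- basic estimates on d and ρ
  have hip : ∀ k, (1 - μ) * ‖x k - y k‖ ^ 2 ≤ ⟪x k - y k, d k⟫ := by
    intro k
    have h1 : ⟪x k - y k, d k⟫ = ‖x k - y k‖ ^ 2 - α k * ⟪x k - y k, F (x k) - F (y k)⟫ := by
      rw [hd k, inner_sub_right, real_inner_smul_right, real_inner_self_eq_norm_sq]
    have h2 : ⟪x k - y k, F (x k) - F (y k)⟫ ≤ ‖x k - y k‖ * ‖F (x k) - F (y k)‖ :=
      real_inner_le_norm _ _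
    have h3 := hstep k
    have h4 := mul_le_mul_of_nonneg_left h2 (hα0 k).le
    have h5 := mul_le_mul_of_nonneg_left h3 (norm_nonneg (x k - y k))
    nlinarith [ht0 k]
  have hnd : ∀ k, ‖d k‖ ≤ (1 + μ) * ‖x k - y k‖ := by
    intro k
    rw [hd k]
    calc ‖(x k - y k) - α k • (F (x k) - F (y k))‖
        ≤ ‖x k - y k‖ + ‖α k • (F (x k) - F (y k))‖ := norm_sub_le _ _
      _ = ‖x k - y k‖ + α k * ‖F (x k) - F (y k)‖ := by
          rw [norm_smul, Real.norm_eq_abs, abs_of_pos (hα0 k)]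
      _ ≤ ‖x k - y k‖ + μ * ‖x k - y k‖ := by linarith [hstep k]
      _ = (1 + μ) * ‖x k - y k‖ := by ring
  have hip_pos : ∀ k, 0 < ⟪x k - y k, d k⟫ := fun k =>
    lt_of_lt_of_le (mul_pos (by linarith : (0:ℝ) < 1 - μ) (pow_pos (ht0 k) 2)) (hip k)
  have hdne : ∀ k, 0 < ‖d k‖ := by
    intro k
    rcases eq_or_ne (d k) 0 with h | h
    · exfalso
      have := hip_pos k
      rw [h, inner_zero_right] at this
      exact lt_irrefl _ this
    · exact norm_pos_iff.2 h
  have hρ_id : ∀ k, ρ k * ‖d k‖ ^ 2 = ⟪x k - y k, d k⟫ := fun k => by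
    rw [hρ k, div_mul_cancel₀ _ (ne_of_gt (pow_pos (hdne k) 2))]
  have hρ_pos : ∀ k, 0 < ρ k := fun k => by
    rw [hρ k]; exact div_pos (hip_pos k) (pow_pos (hdne k) 2)
  set c2 : ℝ := ((1 - μ) / (1 + μ)) ^ 2 with hc2
  have hc2pos : 0 < c2 := by
    have : 0 < (1 - μ) / (1 + μ) := div_pos (by linarith) (by linarith)
    exact pow_pos this 2
  have hkey : ∀ k, c2 * ‖x k - y k‖ ^ 2 ≤ ρ k ^ 2 * ‖d k‖ ^ 2 := by
    intro k
    have hD2pos : 0 < ‖d k‖ ^ 2 := pow_pos (hdne k) 2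
    have h1 : ρ k ^ 2 * ‖d k‖ ^ 2 * ‖d k‖ ^ 2 = ⟪x k - y k, d k⟫ ^ 2 := by
      rw [← hρ_id k]; ring
    have h2 : ‖d k‖ ^ 2 ≤ (1 + μ) ^ 2 * ‖x k - y k‖ ^ 2 := by
      nlinarith [hnd k, norm_nonneg (d k), ht0 k]
    have h3 := hip k
    have hc2' : c2 * (1 + μ) ^ 2 = (1 - μ) ^ 2 := by
      rw [hc2]; field_simp
    have h4 : c2 * ‖x k - y k‖ ^ 2 * ‖d k‖ ^ 2 ≤ ⟪x k - y k, d k⟫ ^ 2 := by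
      have h1μ : (1 + μ) ≠ 0 := by linarith
      have hc2'' : c2 * ‖x k - y k‖ ^ 2 * ((1 + μ) ^ 2 * ‖x k - y k‖ ^ 2)
          = ((1 - μ) * ‖x k - y k‖ ^ 2) * ((1 - μ) * ‖x k - y k‖ ^ 2) := by
        rw [hc2]; field_simp
      nlinarith [mul_le_mul_of_nonneg_left h2
          (by positivity : (0:ℝ) ≤ c2 * ‖x k - y k‖ ^ 2),
        mul_self_le_mul_self (by nlinarith [sq_nonneg ‖x k - y k‖] : (0:ℝ) ≤ (1 - μ) * ‖x k - y k‖ ^ 2) h3,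
        hc2'']
    nlinarith [h1, h4, hD2pos]
  -- the Fejér inequality
  have fejer : ∀ z ∈ C, (∀ w ∈ C, ⟪F z, w - z⟫ ≥ 0) → ∀ k,
      ‖x (k + 1) - z‖ ^ 2 ≤ ‖x k - z‖ ^ 2 - (γ * (2 - γ)) * (ρ k ^ 2 * ‖d k‖ ^ 2) := by
    intro z hzC hzsol k
    have hzT : z ∈ T k := by
      rw [hT k]; exact hCproj k z hzC
    have hTconv : Convex ℝ (T k) := by
      rw [hT k]
      intro w1 h1 w2 h2 s t hs ht hst
      simp only [Set.mem_setOf_eq] at h1 h2 ⊢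
      have e : (s • w1 + t • w2) - y k = s • (w1 - y k) + t • (w2 - y k) := by
        have e' : s • (w1 - y k) + t • (w2 - y k) = (s • w1 + t • w2) - (s + t) • y k := by
          rw [add_smul, smul_sub, smul_sub]; abel
        rw [e', hst, one_smul]
      rw [e, inner_add_right, real_inner_smul_right, real_inner_smul_right]
      nlinarith [mul_le_mul_of_nonneg_left h1 hs, mul_le_mul_of_nonneg_left h2 ht]
    have hproj2 : ⟪(x k - (γ * ρ k * α k) • F (y k)) - x (k + 1), z - x (k + 1)⟫ ≤ 0 :=
      msem_proj_char hTconv (hx1T k) (hx1proj k) z hzT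
    have key1 : ‖x (k + 1) - z‖ ^ 2 ≤
        ‖(x k - (γ * ρ k * α k) • F (y k)) - z‖ ^ 2 -
          ‖(x k - (γ * ρ k * α k) • F (y k)) - x (k + 1)‖ ^ 2 := by
      have e1 : x (k + 1) - z
          = ((x k - (γ * ρ k * α k) • F (y k)) - z)
            - ((x k - (γ * ρ k * α k) • F (y k)) - x (k + 1)) := by abel
      rw [e1, norm_sub_sq_real]
      have e2 : ⟪(x k - (γ * ρ k * α k) • F (y k)) - z,
          (x k - (γ * ρ k * α k) • F (y k)) - x (k + 1)⟫
          = ‖(x k - (γ * ρ k * α k) • F (y k)) - x (k + 1)‖ ^ 2 +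
            ⟪(x k - (γ * ρ k * α k) • F (y k)) - x (k + 1), z - x (k + 1)⟫ * (-1) := by
        have e3 : (x k - (γ * ρ k * α k) • F (y k)) - z
            = ((x k - (γ * ρ k * α k) • F (y k)) - x (k + 1)) - (z - x (k + 1)) := by abel
        rw [e3, inner_sub_left, real_inner_self_eq_norm_sq,
          real_inner_comm (z - x (k + 1))]
        ring
      nlinarith [hproj2, e2]
    have key2 : ‖(x k - (γ * ρ k * α k) • F (y k)) - z‖ ^ 2 -
        ‖(x k - (γ * ρ k * α k) • F (y k)) - x (k + 1)‖ ^ 2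
        = ‖x k - z‖ ^ 2 - ‖x k - x (k + 1)‖ ^ 2
          - 2 * (γ * ρ k * α k) * ⟪F (y k), x (k + 1) - z⟫ := by
      have e4 : ⟪F (y k), x (k + 1) - z⟫ = ⟪x k - z, F (y k)⟫ - ⟪x k - x (k + 1), F (y k)⟫ := by
        rw [real_inner_comm, ← inner_sub_left]
        congr 1
        abel
      rw [msem_expand, msem_expand, e4]
      ring
    have key3 : (0:ℝ) ≤ ⟪F (y k), y k - z⟫ := by
      have m1 := hmono (y k) z
      have m2 := hzsol (y k) (hyC k)
      have e : ⟪F (y k) - F z, y k - z⟫ = ⟪F (y k), y k - z⟫ - ⟪F z, y k - z⟫ :=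
        inner_sub_left _ _ _
      linarith
    have key3' : ⟪F (y k), x (k + 1) - y k⟫ ≤ ⟪F (y k), x (k + 1) - z⟫ := by
      have e : ⟪F (y k), x (k + 1) - z⟫
          = ⟪F (y k), x (k + 1) - y k⟫ + ⟪F (y k), y k - z⟫ := by
        rw [show x (k + 1) - z = (x (k + 1) - y k) + (y k - z) by abel, inner_add_right]
      linarith
    have key4 : ⟪d k, x (k + 1) - y k⟫ ≤ α k * ⟪F (y k), x (k + 1) - y k⟫ := by
      have hWT := hx1T k
      rw [hT k] at hWT
      have h := hWT
      simp only [Set.mem_setOf_eq] at h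
      have e : ⟪(x k - α k • F (x k)) - y k, x (k + 1) - y k⟫
          = ⟪x k - y k, x (k + 1) - y k⟫ - α k * ⟪F (x k), x (k + 1) - y k⟫ := by
        simp only [inner_sub_left, real_inner_smul_left]
        ring
      have e2 : ⟪d k, x (k + 1) - y k⟫
          = ⟪x k - y k, x (k + 1) - y k⟫ - α k * ⟪F (x k), x (k + 1) - y k⟫
            + α k * ⟪F (y k), x (k + 1) - y k⟫ := by
        rw [hd k]
        simp only [inner_sub_left, real_inner_smul_left]
        ring
      linarith
    have key5 : ⟪d k, x (k + 1) - y k⟫ = ⟪d k, x (k + 1) - x k⟫ + ρ k * ‖d k‖ ^ 2 := by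
      have e5a : ⟪d k, x (k + 1) - y k⟫ = ⟪d k, x (k + 1) - x k⟫ + ⟪d k, x k - y k⟫ := by
        rw [← inner_add_right]
        congr 1
        abel
      have e5b : ⟪d k, x k - y k⟫ = ⟪x k - y k, d k⟫ := real_inner_comm _ _
      rw [e5a, e5b, ← hρ_id k]
    have key6 : -‖x k - x (k + 1)‖ ^ 2 - 2 * (γ * ρ k) * ⟪d k, x (k + 1) - x k⟫
        ≤ γ ^ 2 * ρ k ^ 2 * ‖d k‖ ^ 2 := by
      have h0 : (0:ℝ) ≤ ‖(x (k + 1) - x k) + (γ * ρ k) • d k‖ ^ 2 := sq_nonneg _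
      rw [norm_add_sq_real, real_inner_smul_right] at h0
      have hn : ‖(γ * ρ k) • d k‖ ^ 2 = (γ * ρ k) ^ 2 * ‖d k‖ ^ 2 := by
        rw [norm_smul, mul_pow, Real.norm_eq_abs, sq_abs]
      have hrev2 : ‖x k - x (k + 1)‖ ^ 2 = ‖x (k + 1) - x k‖ ^ 2 := by rw [norm_sub_rev]
      have hcms : ⟪x (k + 1) - x k, d k⟫ = ⟪d k, x (k + 1) - x k⟫ := real_inner_comm _ _
      have hcms2 : γ * ρ k * ⟪x (k + 1) - x k, d k⟫ = γ * ρ k * ⟪d k, x (k + 1) - x k⟫ := by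
        rw [hcms]
      rw [hn] at h0
      nlinarith [h0, hrev2, hcms2]
    have hg_pos : (0:ℝ) ≤ γ * ρ k * α k :=
      (mul_pos (mul_pos hγ0 (hρ_pos k)) (hα0 k)).le
    have hγr : (0:ℝ) ≤ γ * ρ k := (mul_pos hγ0 (hρ_pos k)).le
    have s1 : ‖x (k + 1) - z‖ ^ 2 ≤ ‖x k - z‖ ^ 2 - ‖x k - x (k + 1)‖ ^ 2
        - 2 * (γ * ρ k * α k) * ⟪F (y k), x (k + 1) - z⟫ := by linarith [key1, key2]
    have s2 := mul_le_mul_of_nonneg_left key3' hg_pos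
    have s3 := mul_le_mul_of_nonneg_left key4 hγr
    have s4 : (γ * ρ k) * ⟪d k, x (k + 1) - y k⟫
        = (γ * ρ k) * ⟪d k, x (k + 1) - x k⟫ + γ * ρ k ^ 2 * ‖d k‖ ^ 2 := by
      rw [key5]; ring
    linarith [s1, s2, s3, s4, key6]
  set κ : ℝ := γ * (2 - γ) * c2 with hκdef
  have hκ : 0 < κ := by
    apply mul_pos (mul_pos hγ0 (by linarith)) hc2pos
  have fejer2 : ∀ z ∈ C, (∀ w ∈ C, ⟪F z, w - z⟫ ≥ 0) → ∀ k,
      ‖x (k + 1) - z‖ ^ 2 ≤ ‖x k - z‖ ^ 2 - κ * ‖x k - y k‖ ^ 2 := by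
    intro z hzC hzsol k
    have h1 := fejer z hzC hzsol k
    have h2 := mul_le_mul_of_nonneg_left (hkey k) (by nlinarith : (0:ℝ) ≤ γ * (2 - γ))
    nlinarith [h1, h2]
  have hanti : ∀ z ∈ C, (∀ w ∈ C, ⟪F z, w - z⟫ ≥ 0) →
      Antitone (fun k => ‖x k - z‖ ^ 2) := by
    intro z hzC hzsol
    apply antitone_nat_of_succ_le
    intro k
    have := fejer2 z hzC hzsol k
    nlinarith [sq_nonneg ‖x k - y k‖, hκ]
  have hlim : ∀ z ∈ C, (∀ w ∈ C, ⟪F z, w - z⟫ ≥ 0) →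
      ∃ c, Filter.Tendsto (fun k => ‖x k - z‖ ^ 2) Filter.atTop (𝓝 c) := by
    intro z hzC hzsol
    refine ⟨_, tendsto_atTop_ciInf (hanti z hzC hzsol) ⟨0, ?_⟩⟩
    rintro _ ⟨k, rfl⟩
    positivity
  -- ‖x k - y k‖ → 0
  obtain ⟨c0, hc0⟩ := hlim z0 hz0C hz0
  have hdiff : Filter.Tendsto (fun k => ‖x k - z0‖ ^ 2 - ‖x (k + 1) - z0‖ ^ 2)
      Filter.atTop (𝓝 0) := by
    have h2 : Filter.Tendsto (fun k => ‖x (k + 1) - z0‖ ^ 2) Filter.atTop (𝓝 c0) :=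
      hc0.comp (Filter.tendsto_add_atTop_nat 1)
    simpa using hc0.sub h2
  have hsq : Filter.Tendsto (fun k => ‖x k - y k‖ ^ 2) Filter.atTop (𝓝 0) := by
    apply squeeze_zero (fun k => by positivity)
      (g := fun k => (‖x k - z0‖ ^ 2 - ‖x (k + 1) - z0‖ ^ 2) / κ)
    · intro k
      rw [le_div_iff₀ hκ]
      have := fejer2 z0 hz0C hz0 k
      nlinarith
    · simpa using hdiff.div_const κ
  have hxyto : Filter.Tendsto (fun k => ‖x k - y k‖) Filter.atTop (𝓝 0) := by
    have h := (Real.continuous_sqrt.tendsto 0).comp hsq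
    rw [Real.sqrt_zero] at h
    refine h.congr fun k => ?_
    exact Real.sqrt_sq (norm_nonneg _)
  -- boundedness
  obtain ⟨M, hMdef⟩ : ∃ M : ℝ, M = ‖z0‖ + ‖x 0 - z0‖ := ⟨_, rfl⟩
  have hM : ∀ k, ‖x k‖ ≤ M := by
    intro k
    have h1 : ‖x k - z0‖ ^ 2 ≤ ‖x 0 - z0‖ ^ 2 := hanti z0 hz0C hz0 (Nat.zero_le k)
    have h2 : ‖x k - z0‖ ≤ ‖x 0 - z0‖ := by
      nlinarith [norm_nonneg (x k - z0), norm_nonneg (x 0 - z0)]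
    calc ‖x k‖ = ‖z0 + (x k - z0)‖ := by congr 1; abel
      _ ≤ ‖z0‖ + ‖x k - z0‖ := norm_add_le _ _
      _ ≤ M := by rw [hMdef]; linarith
  -- any weak cluster point of a subsequence is a solution
  have hcluster_sol : ∀ (m : ℕ → ℕ), Filter.Tendsto m Filter.atTop Filter.atTop →
      ∀ q : H, (∀ u : H, MapClusterPt ⟪q, u⟫ Filter.atTop (fun n => ⟪x (m n), u⟫)) →
      q ∈ C ∧ ∀ w ∈ C, ⟪F q, w - q⟫ ≥ 0 := by
    intro m hm q hq
    have hxy_m : Filter.Tendsto (fun n => ‖x (m n) - y (m n)‖) Filter.atTop (𝓝 0) :=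
      hxyto.comp hm
    -- q ∈ C
    obtain ⟨v, hvC, hvmin⟩ :=
      exists_norm_eq_iInf_of_complete_convex hne hclosed.isComplete hconv q
    have hvchar := (norm_eq_iInf_iff_real_inner_le_zero hconv hvC).1 hvmin
    have hb : ∀ n, ⟪x (m n), q - v⟫ + (⟪q - v, y (m n) - x (m n)⟫ - ⟪q - v, v⟫) ≤ 0 := by
      intro n
      have h := hvchar (y (m n)) (hyC (m n))
      have e : ⟪q - v, y (m n) - v⟫
          = ⟪x (m n), q - v⟫ + (⟪q - v, y (m n) - x (m n)⟫ - ⟪q - v, v⟫) := by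
        rw [show y (m n) - v = (x (m n) + (y (m n) - x (m n))) - v by abel,
          inner_sub_right, inner_add_right, real_inner_comm (q - v) (x (m n))]
        ring
      linarith [e ▸ h]
    have hzero : Filter.Tendsto (fun n => ⟪q - v, y (m n) - x (m n)⟫) Filter.atTop (𝓝 0) := by
      apply squeeze_zero_norm (a := fun n => ‖q - v‖ * ‖x (m n) - y (m n)‖)
      · intro n
        rw [Real.norm_eq_abs]
        calc |⟪q - v, y (m n) - x (m n)⟫| ≤ ‖q - v‖ * ‖y (m n) - x (m n)‖ :=
              abs_real_inner_le_norm _ _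
          _ = ‖q - v‖ * ‖x (m n) - y (m n)‖ := by rw [norm_sub_rev (y (m n)) (x (m n))]
      · simpa using hxy_m.const_mul ‖q - v‖
    have hgten : Filter.Tendsto (fun n => ⟪q - v, y (m n) - x (m n)⟫ - ⟪q - v, v⟫)
        Filter.atTop (𝓝 (0 - ⟪q - v, v⟫)) := hzero.sub_const _
    have hmcp := msem_mcp_add (hq (q - v)) hgten
    have hval : ⟪q, q - v⟫ + (0 - ⟪q - v, v⟫) = ‖q - v‖ ^ 2 := by
      have e : ⟪q - v, q - v⟫ = ⟪q, q - v⟫ - ⟪q - v, v⟫ := by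
        rw [inner_sub_left, real_inner_comm v (q - v)]
      rw [real_inner_self_eq_norm_sq] at e
      linarith
    rw [hval] at hmcp
    have hle : (0:ℝ) ≤ -‖q - v‖ ^ 2 := by
      apply msem_mcp_nonneg (msem_mcp_neg hmcp) (ε := fun _ => (0:ℝ))
      · exact Filter.Eventually.of_forall fun n => by simpa using neg_nonneg.mpr (hb n)
      · exact tendsto_const_nhds
    have hqv : q = v := by
      have h1 : ‖q - v‖ = 0 := by nlinarith [norm_nonneg (q - v)]
      rw [norm_eq_zero, sub_eq_zero] at h1
      exact h1
    have hqC : q ∈ C := hqv ▸ hvC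
    -- Minty inequality
    have minty : ∀ w ∈ C, (0:ℝ) ≤ ⟪F w, w - q⟫ := by
      intro w hw
      obtain ⟨B, hBdef⟩ : ∃ B : ℝ, B = ‖w‖ + M + 1 := ⟨_, rfl⟩
      have hev : ∀ᶠ n in Filter.atTop,
          -((1 / αlow + L) * B * ‖x (m n) - y (m n)‖) ≤ ⟪F w, w - y (m n)⟫ := by
        have h1 : ∀ᶠ n in Filter.atTop, ‖x (m n) - y (m n)‖ ≤ 1 := by
          have h2 := msem_ev hxy_m one_pos
          refine h2.mono fun n hn => ?_
          rw [sub_zero, abs_of_nonneg (norm_nonneg _)] at hn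
          exact hn.le
        refine h1.mono fun n hn => ?_
        have hyn : ‖y (m n)‖ ≤ M + 1 := by
          have h3 : ‖y (m n)‖ ≤ ‖x (m n)‖ + ‖x (m n) - y (m n)‖ := by
            calc ‖y (m n)‖ = ‖x (m n) - (x (m n) - y (m n))‖ := by congr 1; abel
              _ ≤ ‖x (m n)‖ + ‖x (m n) - y (m n)‖ := norm_sub_le _ _
          linarith [hM (m n)]
        have hwy : ‖w - y (m n)‖ ≤ B := by
          calc ‖w - y (m n)‖ ≤ ‖w‖ + ‖y (m n)‖ := norm_sub_le _ _
            _ ≤ B := by rw [hBdef]; linarith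
        have hmono1 : ⟪F (y (m n)), w - y (m n)⟫ ≤ ⟪F w, w - y (m n)⟫ := by
          have h4 := hmono w (y (m n))
          have e : ⟪F w - F (y (m n)), w - y (m n)⟫
              = ⟪F w, w - y (m n)⟫ - ⟪F (y (m n)), w - y (m n)⟫ := inner_sub_left _ _ _
          linarith
        have hlip1 : ⟪F (x (m n)), w - y (m n)⟫ - L * ‖x (m n) - y (m n)‖ * ‖w - y (m n)‖
            ≤ ⟪F (y (m n)), w - y (m n)⟫ := by
          have e : ⟪F (y (m n)), w - y (m n)⟫
              = ⟪F (x (m n)), w - y (m n)⟫ - ⟪F (x (m n)) - F (y (m n)), w - y (m n)⟫ := by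
            rw [inner_sub_left]; ring
          have h5 : ⟪F (x (m n)) - F (y (m n)), w - y (m n)⟫
              ≤ ‖F (x (m n)) - F (y (m n))‖ * ‖w - y (m n)‖ := real_inner_le_norm _ _
          have h6 : ‖F (x (m n)) - F (y (m n))‖ * ‖w - y (m n)‖
              ≤ (L * ‖x (m n) - y (m n)‖) * ‖w - y (m n)‖ :=
            mul_le_mul_of_nonneg_right (hLip _ _) (norm_nonneg _)
          linarith
        have hproj1 : -(1 / αlow) * (‖x (m n) - y (m n)‖ * ‖w - y (m n)‖)
            ≤ ⟪F (x (m n)), w - y (m n)⟫ := by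
          have h7 := hCproj (m n) w hw
          have e : ⟪(x (m n) - α (m n) • F (x (m n))) - y (m n), w - y (m n)⟫
              = ⟪x (m n) - y (m n), w - y (m n)⟫ - α (m n) * ⟪F (x (m n)), w - y (m n)⟫ := by
            rw [show (x (m n) - α (m n) • F (x (m n))) - y (m n)
                = (x (m n) - y (m n)) - α (m n) • F (x (m n)) by abel,
              inner_sub_left, real_inner_smul_left]
          have h8 : -(‖x (m n) - y (m n)‖ * ‖w - y (m n)‖) ≤ ⟪x (m n) - y (m n), w - y (m n)⟫ := by
            have := abs_real_inner_le_norm (x (m n) - y (m n)) (w - y (m n))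
            linarith [neg_abs_le ⟪x (m n) - y (m n), w - y (m n)⟫]
          rcases le_or_gt 0 ⟪F (x (m n)), w - y (m n)⟫ with hc | hc
          · have h9 : (0:ℝ) ≤ (1 / αlow) * (‖x (m n) - y (m n)‖ * ‖w - y (m n)‖) :=
              mul_nonneg (one_div_nonneg.2 hαlow.le)
                (mul_nonneg (norm_nonneg _) (norm_nonneg _))
            linarith
          · have h10 : α (m n) * ⟪F (x (m n)), w - y (m n)⟫
                ≤ αlow * ⟪F (x (m n)), w - y (m n)⟫ :=
              mul_le_mul_of_nonpos_right (hαbd (m n)).1 hc.le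
            have h11 : -(‖x (m n) - y (m n)‖ * ‖w - y (m n)‖)
                ≤ α (m n) * ⟪F (x (m n)), w - y (m n)⟫ := by linarith [e ▸ h7]
            have h12 : (-(‖x (m n) - y (m n)‖ * ‖w - y (m n)‖)) / αlow
                ≤ ⟪F (x (m n)), w - y (m n)⟫ := by
              rw [div_le_iff₀ hαlow]
              linarith
            have h13 : -(1 / αlow) * (‖x (m n) - y (m n)‖ * ‖w - y (m n)‖)
                = (-(‖x (m n) - y (m n)‖ * ‖w - y (m n)‖)) / αlow := by ring
            linarith [h13 ▸ h12]
        have hsB : ‖x (m n) - y (m n)‖ * ‖w - y (m n)‖ ≤ ‖x (m n) - y (m n)‖ * B :=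
          mul_le_mul_of_nonneg_left hwy (norm_nonneg _)
        have hcoef1 : -(1 / αlow) * (‖x (m n) - y (m n)‖ * B)
            ≤ -(1 / αlow) * (‖x (m n) - y (m n)‖ * ‖w - y (m n)‖) := by
          have := mul_le_mul_of_nonneg_left hsB (one_div_nonneg.2 hαlow.le)
          linarith
        have hcoef2 : L * ‖x (m n) - y (m n)‖ * ‖w - y (m n)‖ ≤ L * (‖x (m n) - y (m n)‖ * B) := by
          have := mul_le_mul_of_nonneg_left hsB hL.le
          linarith
        have hfin : -((1 / αlow + L) * B * ‖x (m n) - y (m n)‖)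
            = -(1 / αlow) * (‖x (m n) - y (m n)‖ * B) - L * (‖x (m n) - y (m n)‖ * B) := by
          ring
        linarith [hmono1, hlip1, hproj1, hcoef1, hcoef2, hfin]
      have hzero2 : Filter.Tendsto (fun n => ⟪F w, y (m n) - x (m n)⟫) Filter.atTop (𝓝 0) := by
        apply squeeze_zero_norm (a := fun n => ‖F w‖ * ‖x (m n) - y (m n)‖)
        · intro n
          rw [Real.norm_eq_abs]
          calc |⟪F w, y (m n) - x (m n)⟫| ≤ ‖F w‖ * ‖y (m n) - x (m n)‖ :=
                abs_real_inner_le_norm _ _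
            _ = ‖F w‖ * ‖x (m n) - y (m n)‖ := by rw [norm_sub_rev (y (m n)) (x (m n))]
        · simpa using hxy_m.const_mul ‖F w‖
      have hg2 : Filter.Tendsto (fun n => ⟪F w, w⟫ - ⟪F w, y (m n) - x (m n)⟫)
          Filter.atTop (𝓝 (⟪F w, w⟫ - 0)) := tendsto_const_nhds.sub hzero2
      have hmcp2 := msem_mcp_add (msem_mcp_neg (hq (F w))) hg2
      have hfun : (fun n => -⟪x (m n), F w⟫ + (⟪F w, w⟫ - ⟪F w, y (m n) - x (m n)⟫))
          = fun n => ⟪F w, w - y (m n)⟫ := by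
        funext n
        rw [inner_sub_right, inner_sub_right, real_inner_comm (x (m n)) (F w)]
        ring
      rw [hfun] at hmcp2
      have hval2 : -⟪q, F w⟫ + (⟪F w, w⟫ - 0) = ⟪F w, w - q⟫ := by
        rw [inner_sub_right, real_inner_comm q (F w)]
        ring
      rw [hval2] at hmcp2
      exact msem_mcp_nonneg hmcp2 hev
        (by simpa using hxy_m.const_mul ((1 / αlow + L) * B))
    refine ⟨hqC, fun w hw => ?_⟩
    have hIoc : ∀ t ∈ Set.Ioc (0:ℝ) 1, -(L * ‖w - q‖ ^ 2) * t ≤ ⟪F q, w - q⟫ := by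
      intro t ht
      obtain ⟨ht0', ht1⟩ := ht
      have hwtC : q + t • (w - q) ∈ C := by
        have h := hconv hqC hw (by linarith : (0:ℝ) ≤ 1 - t) ht0'.le (by ring)
        have e : (1 - t) • q + t • w = q + t • (w - q) := by
          rw [smul_sub, sub_smul, one_smul]; abel
        rwa [e] at h
      have h0 := minty _ hwtC
      rw [show q + t • (w - q) - q = t • (w - q) by abel, real_inner_smul_right] at h0
      have h1 : (0:ℝ) ≤ ⟪F (q + t • (w - q)), w - q⟫ := by nlinarith [h0, ht0']
      have h2 : ⟪F q, w - q⟫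
          = ⟪F (q + t • (w - q)), w - q⟫ - ⟪F (q + t • (w - q)) - F q, w - q⟫ := by
        rw [inner_sub_left]; ring
      have h3 : ⟪F (q + t • (w - q)) - F q, w - q⟫ ≤ L * (t * ‖w - q‖) * ‖w - q‖ := by
        have ha := real_inner_le_norm (F (q + t • (w - q)) - F q) (w - q)
        have hb := hLip (q + t • (w - q)) q
        have hc : ‖q + t • (w - q) - q‖ = t * ‖w - q‖ := by
          rw [show q + t • (w - q) - q = t • (w - q) by abel, norm_smul,
            Real.norm_eq_abs, abs_of_pos ht0']
        rw [hc] at hb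
        nlinarith [norm_nonneg (w - q), norm_nonneg (F (q + t • (w - q)) - F q)]
      nlinarith [h1, h2, h3]
    have htend : Filter.Tendsto (fun t : ℝ => -(L * ‖w - q‖ ^ 2) * t) (𝓝[>] (0:ℝ)) (𝓝 0) := by
      have h := (continuous_const.mul continuous_id).tendsto (0:ℝ)
        (f := fun t : ℝ => -(L * ‖w - q‖ ^ 2) * t)
      rw [mul_zero] at h
      exact h.mono_left nhdsWithin_le_nhds
    have hev2 : ∀ᶠ t in 𝓝[>] (0:ℝ), -(L * ‖w - q‖ ^ 2) * t ≤ ⟪F q, w - q⟫ := by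
      filter_upwards [Ioc_mem_nhdsGT_of_mem (Set.mem_Ico.2 ⟨le_refl 0, one_pos⟩)] with t ht
      exact hIoc t ht
    exact le_of_tendsto htend hev2
  -- Opial uniqueness
  have hopial : ∀ (p q : H), p ∈ C → (∀ w ∈ C, ⟪F p, w - p⟫ ≥ 0) →
      q ∈ C → (∀ w ∈ C, ⟪F q, w - q⟫ ≥ 0) →
      ∀ (m1 m2 : ℕ → ℕ),
      (∀ u, MapClusterPt ⟪p, u⟫ Filter.atTop (fun n => ⟪x (m1 n), u⟫)) →
      (∀ u, MapClusterPt ⟪q, u⟫ Filter.atTop (fun n => ⟪x (m2 n), u⟫)) →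
      Filter.Tendsto m1 Filter.atTop Filter.atTop →
      Filter.Tendsto m2 Filter.atTop Filter.atTop → p = q := by
    intro p q hpC hpsol hqC hqsol m1 m2 hp hq hm1 hm2
    obtain ⟨cp, hcp⟩ := hlim p hpC hpsol
    obtain ⟨cq, hcq⟩ := hlim q hqC hqsol
    have hfull : Filter.Tendsto (fun k => ⟪x k, p - q⟫) Filter.atTop
        (𝓝 ((cq - cp + ‖p‖ ^ 2 - ‖q‖ ^ 2) / 2)) := by
      have hiden : ∀ k, (‖x k - q‖ ^ 2 - ‖x k - p‖ ^ 2 + ‖p‖ ^ 2 - ‖q‖ ^ 2) / 2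
          = ⟪x k, p - q⟫ := by
        intro k
        rw [norm_sub_sq_real, norm_sub_sq_real, inner_sub_right]
        ring
      refine Filter.Tendsto.congr hiden ?_
      exact (((hcq.sub hcp).add_const (‖p‖ ^ 2)).sub_const (‖q‖ ^ 2)).div_const 2
    have e1 : ⟪p, p - q⟫ = (cq - cp + ‖p‖ ^ 2 - ‖q‖ ^ 2) / 2 :=
      msem_mcp_eq_of_tendsto (hp (p - q)) (hfull.comp hm1)
    have e2 : ⟪q, p - q⟫ = (cq - cp + ‖p‖ ^ 2 - ‖q‖ ^ 2) / 2 :=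
      msem_mcp_eq_of_tendsto (hq (p - q)) (hfull.comp hm2)
    have e3 : ⟪p - q, p - q⟫ = (0:ℝ) := by
      rw [inner_sub_left, e1, e2]; ring
    have e4 : p - q = 0 := by
      rwa [real_inner_self_eq_norm_sq, pow_eq_zero_iff (by norm_num), norm_eq_zero] at e3
    exact sub_eq_zero.1 e4
  -- assemble
  obtain ⟨p, hp⟩ := msem_weak_cluster (z := x) (R := M) hM
  obtain ⟨hpC, hpsol⟩ := hcluster_sol id Filter.tendsto_id p hp
  refine ⟨p, hpC, hpsol, fun u => ?_⟩
  apply Filter.tendsto_of_subseq_tendsto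
  intro ns hns
  have hbdd2 : ∀ n, ⟪x (ns n), u⟫ ∈ Set.Icc (-(M * ‖u‖ + 1)) (M * ‖u‖ + 1) := by
    intro n
    have h1 : |⟪x (ns n), u⟫| ≤ M * ‖u‖ :=
      (abs_real_inner_le_norm _ _).trans
        (mul_le_mul_of_nonneg_right (hM _) (norm_nonneg _))
    rw [abs_le] at h1
    exact ⟨by linarith [h1.1], by linarith [h1.2]⟩
  obtain ⟨c, -, φ, hφmono, hφtend⟩ :=
    tendsto_subseq_of_bounded (Metric.isBounded_Icc _ _) hbdd2
  refine ⟨φ, ?_⟩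
  have hmφ : Filter.Tendsto (fun n => ns (φ n)) Filter.atTop Filter.atTop :=
    hns.comp hφmono.tendsto_atTop
  obtain ⟨q, hqcl⟩ := msem_weak_cluster (z := fun n => x (ns (φ n))) (R := M) (fun n => hM _)
  obtain ⟨hqC, hqsol⟩ := hcluster_sol _ hmφ q hqcl
  have hpq : p = q := hopial p q hpC hpsol hqC hqsol id _ hp hqcl Filter.tendsto_id hmφ
  have hc : ⟪q, u⟫ = c := msem_mcp_eq_of_tendsto (hqcl u) hφtend
  have : Filter.Tendsto (fun n => ⟪x (ns (φ n)), u⟫) Filter.atTop (𝓝 ⟪p, u⟫) := by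
    rw [hpq, hc]
    exact hφtend
  exact this
end

section
/- (Demiclosedness argument.) Let $C \subseteq \mathcal{H}$ be nonempty closed convex, $F$ monotone and $L$-Lipschitz. Suppose sequences $\{x^k\}, \{y^k\}$ satisfy $y^k = P_C(x^k - \alpha_k F(x^k))$ with $\alpha_k \geq \underline{\alpha} > 0$ bounded above, $\|x^k - y^k\| \to 0$, and $x^{k_i} \rightharpoonup \hat{x}$ along a subsequence. Then $\hat{x} \in C$ and $\hat{x}$ solves the variational inequality: $\langle F(\hat{x}), x - \hat{x}\rangle \geq 0$ for all $x \in C$. -/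
open scoped RealInnerProductSpace Topology

open Filter

theorem demiclosedness_argument
    {H : Type*} [NormedAddCommGroup H] [InnerProductSpace ℝ H] [CompleteSpace H]
    (C : Set H) (hne : C.Nonempty) (hclosed : IsClosed C) (hconv : Convex ℝ C)
    (F : H → H) (hmono : ∀ x y : H, ⟪F x - F y, x - y⟫ ≥ 0)
    (L : ℝ) (hL : 0 < L) (hLip : ∀ x y : H, ‖F x - F y‖ ≤ L * ‖x - y‖)
    (x y : ℕ → H) (α : ℕ → ℝ) (αlow αhigh : ℝ) (hαlow : 0 < αlow)
    (hαbd : ∀ k, αlow ≤ α k ∧ α k ≤ αhigh)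
    (hyC : ∀ k, y k ∈ C)
    (hyproj : ∀ k, ∀ z ∈ C,
      ‖(x k - α k • F (x k)) - y k‖ ≤ ‖(x k - α k • F (x k)) - z‖)
    (hdiff : Filter.Tendsto (fun k => ‖x k - y k‖) Filter.atTop (𝓝 0))
    (xhat : H) (φ : ℕ → ℕ) (hφ : StrictMono φ)
    (hweak : ∀ u : H, Filter.Tendsto (fun i => ⟪x (φ i), u⟫) Filter.atTop (𝓝 ⟪xhat, u⟫)) :
    xhat ∈ C ∧ ∀ w ∈ C, ⟪F xhat, w - xhat⟫ ≥ 0 := by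
  haveI : Nonempty C := hne.to_subtype
  have hdiff' : Tendsto (fun i => ‖x (φ i) - y (φ i)‖) atTop (𝓝 0) :=
    hdiff.comp hφ.tendsto_atTop
  -- weak convergence of the y-subsequence
  have hweaky : ∀ u : H, Tendsto (fun i => ⟪y (φ i), u⟫) atTop (𝓝 ⟪xhat, u⟫) := by
    intro u
    have h1 : Tendsto (fun i => ⟪x (φ i) - y (φ i), u⟫) atTop (𝓝 0) := by
      refine squeeze_zero_norm (fun i => ?_) (by simpa using hdiff'.mul_const ‖u‖)
      simpa [Real.norm_eq_abs] using abs_real_inner_le_norm (x (φ i) - y (φ i)) u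
    have h2 := (hweak u).sub h1
    simp only [inner_sub_left, sub_sub_cancel, sub_zero] at h2
    exact h2
  -- variational characterization of the projection
  have hchar : ∀ k, ∀ z ∈ C, ⟪(x k - α k • F (x k)) - y k, z - y k⟫ ≤ 0 := by
    intro k z hz
    have heq : ‖(x k - α k • F (x k)) - y k‖ = ⨅ w : C, ‖(x k - α k • F (x k)) - w‖ := by
      refine le_antisymm (le_ciInf fun w => hyproj k w w.2) ?_
      have hbb : BddBelow (Set.range fun w : C => ‖(x k - α k • F (x k)) - (w:H)‖) :=
        ⟨0, by rintro - ⟨w, rfl⟩; exact norm_nonneg _⟩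
      exact ciInf_le hbb ⟨y k, hyC k⟩
    exact (norm_eq_iInf_iff_real_inner_le_zero hconv (hyC k)).1 heq z hz
  -- xhat ∈ C
  have hmem : xhat ∈ C := by
    obtain ⟨p, hpC, hpmin⟩ :=
      exists_norm_eq_iInf_of_complete_convex hne hclosed.isComplete hconv xhat
    have hchar' := (norm_eq_iInf_iff_real_inner_le_zero hconv hpC).1 hpmin
    have hle : ∀ i, ⟪y (φ i), xhat - p⟫ - ⟪p, xhat - p⟫ ≤ 0 := by
      intro i
      have := hchar' _ (hyC (φ i))
      rw [real_inner_comm, inner_sub_left] at this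
      linarith
    have htend : Tendsto (fun i => ⟪y (φ i), xhat - p⟫ - ⟪p, xhat - p⟫) atTop
        (𝓝 (⟪xhat, xhat - p⟫ - ⟪p, xhat - p⟫)) := (hweaky (xhat - p)).sub_const _
    have hfin : ⟪xhat, xhat - p⟫ - ⟪p, xhat - p⟫ ≤ 0 :=
      le_of_tendsto htend (Eventually.of_forall hle)
    have : ⟪xhat - p, xhat - p⟫ ≤ 0 := by rw [inner_sub_left]; linarith
    have hz : xhat - p = 0 := real_inner_self_nonpos.mp this
    have : xhat = p := by rwa [sub_eq_zero] at hz
    rwa [this]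
  -- boundedness of the y-subsequence via Banach-Steinhaus
  have hbY : ∃ M : ℝ, ∀ i, ‖y (φ i)‖ ≤ M := by
    have hpt : ∀ u : H, ∃ Cb : ℝ, ∀ i, ‖(innerSL ℝ (y (φ i))) u‖ ≤ Cb := by
      intro u
      obtain ⟨Cb, hCb⟩ := (hweaky u).norm.bddAbove_range
      exact ⟨Cb, fun i => hCb (Set.mem_range_self i)⟩
    obtain ⟨M, hM⟩ := banach_steinhaus hpt
    exact ⟨M, fun i => by simpa [innerSL_apply_norm] using hM i⟩
  obtain ⟨M, hM⟩ := hbY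
  -- key: ⟪F w, w - xhat⟫ ≥ 0 for all w ∈ C
  have key : ∀ w ∈ C, 0 ≤ ⟪F w, w - xhat⟫ := by
    intro w hw
    set B := M + ‖w‖ with hB
    have hBnn : ∀ i, ‖w - y (φ i)‖ ≤ B := by
      intro i
      calc ‖w - y (φ i)‖ ≤ ‖w‖ + ‖y (φ i)‖ := norm_sub_le _ _
        _ ≤ B := by have := hM i; rw [hB]; linarith
    have hB0 : 0 ≤ B := le_trans (norm_nonneg _) (hBnn 0)
    -- pointwise lower bound
    have hlow : ∀ i, -((1 + αhigh * L)) * (‖x (φ i) - y (φ i)‖ * B)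
        ≤ αlow * ⟪F w, w - y (φ i)⟫ := by
      intro i
      set k := φ i
      set d := x k - y k with hd
      set e := w - y k with he
      set a := α k with ha
      have hal : αlow ≤ a := (hαbd k).1
      have hah : a ≤ αhigh := (hαbd k).2
      have hapos : 0 < a := lt_of_lt_of_le hαlow hal
      -- projection inequality
      have h1 : ⟪d, e⟫ - a * ⟪F (x k), e⟫ ≤ 0 := by
        have := hchar k w hw
        have heq : (x k - a • F (x k)) - y k = d - a • F (x k) := by
          rw [hd]; abel
        rw [heq, inner_sub_left, real_inner_smul_left] at this
        linarith
      -- monotonicity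
      have h2 : ⟪F (x k), e⟫ - ⟪F w, e⟫ ≤ L * ‖d‖ * ‖e‖ := by
        have hm := hmono w (y k)
        rw [inner_sub_left] at hm
        have h3 : ⟪F (x k) - F (y k), e⟫ ≤ ‖F (x k) - F (y k)‖ * ‖e‖ :=
          real_inner_le_norm _ _
        have h4 : ‖F (x k) - F (y k)‖ ≤ L * ‖x k - y k‖ := hLip _ _
        have h5 : ⟪F (x k) - F (y k), e⟫ ≤ L * ‖d‖ * ‖e‖ := by
          calc ⟪F (x k) - F (y k), e⟫ ≤ ‖F (x k) - F (y k)‖ * ‖e‖ := h3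
            _ ≤ L * ‖x k - y k‖ * ‖e‖ :=
              mul_le_mul_of_nonneg_right h4 (norm_nonneg _)
            _ = L * ‖d‖ * ‖e‖ := by rw [hd]
        rw [inner_sub_left] at h5
        linarith
      have h6 : -(‖d‖ * ‖e‖) ≤ ⟪d, e⟫ := by
        have := abs_real_inner_le_norm d e
        have := neg_abs_le ⟪d, e⟫
        linarith [abs_real_inner_le_norm d e]
      have h7 : ‖e‖ ≤ B := hBnn i
      have h8 : (0:ℝ) ≤ ‖d‖ := norm_nonneg _
      have h9 : (0:ℝ) ≤ ‖e‖ := norm_nonneg _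
      -- chain: a * ⟪F w, e⟫ ≥ -(1 + a L) ‖d‖ ‖e‖ ≥ -(1 + αhigh L)‖d‖ B
      have h10a : a * ⟪F (x k), e⟫ - a * ⟪F w, e⟫ ≤ a * (L * ‖d‖ * ‖e‖) := by
        have := mul_le_mul_of_nonneg_left h2 hapos.le
        rw [mul_sub] at this
        exact this
      have h10 : -((1 + a * L)) * (‖d‖ * ‖e‖) ≤ a * ⟪F w, e⟫ := by
        have hr : -((1 + a * L)) * (‖d‖ * ‖e‖)
            = -(‖d‖ * ‖e‖) - a * (L * ‖d‖ * ‖e‖) := by ring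
        linarith [hr.le, hr.ge]
      have h11 : -((1 + αhigh * L)) * (‖d‖ * B) ≤ -((1 + a * L)) * (‖d‖ * ‖e‖) := by
        have p1 : ‖d‖ * ‖e‖ ≤ ‖d‖ * B := mul_le_mul_of_nonneg_left h7 h8
        have p2 : (0:ℝ) ≤ 1 + a * L := by nlinarith
        have p3 : 1 + a * L ≤ 1 + αhigh * L := by nlinarith
        nlinarith [mul_nonneg h8 hB0, mul_le_mul_of_nonneg_left p1 p2,
          mul_le_mul_of_nonneg_right p3 (mul_nonneg h8 hB0)]
      rcases le_or_gt 0 ⟪F w, e⟫ with hpos | hneg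
      · have hq : (0:ℝ) ≤ 1 + αhigh * L := by nlinarith
        nlinarith [mul_nonneg h8 hB0, mul_nonneg hαlow.le hpos]
      · have := mul_le_mul_of_nonpos_right hal hneg.le
        linarith
    -- pass to the limit
    have htendr : Tendsto (fun i => -((1 + αhigh * L)) * (‖x (φ i) - y (φ i)‖ * B))
        atTop (𝓝 0) := by
      have := (hdiff'.mul_const B).const_mul (-(1 + αhigh * L))
      simpa using this
    have htendF : Tendsto (fun i => αlow * ⟪F w, w - y (φ i)⟫) atTop
        (𝓝 (αlow * ⟪F w, w - xhat⟫)) := by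
      have h1 : Tendsto (fun i => ⟪F w, w⟫ - ⟪y (φ i), F w⟫) atTop
          (𝓝 (⟪F w, w⟫ - ⟪xhat, F w⟫)) := (hweaky (F w)).const_sub _
      have h2 : ∀ i, ⟪F w, w - y (φ i)⟫ = ⟪F w, w⟫ - ⟪y (φ i), F w⟫ := by
        intro i; rw [inner_sub_right, real_inner_comm (y (φ i))]
      have h3 : ⟪F w, w - xhat⟫ = ⟪F w, w⟫ - ⟪xhat, F w⟫ := by
        rw [inner_sub_right, real_inner_comm xhat]
      simp only [h2, h3]
      exact h1.const_mul _
    have hfin : (0:ℝ) ≤ αlow * ⟪F w, w - xhat⟫ :=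
      le_of_tendsto_of_tendsto' htendr htendF hlow
    nlinarith
  -- Minty's trick: from ⟪F w, w - xhat⟫ ≥ 0 deduce ⟪F xhat, w - xhat⟫ ≥ 0
  refine ⟨hmem, fun w hw => ?_⟩
  by_cases hwx : w = xhat
  · simp [hwx]
  · have hne0 : w - xhat ≠ 0 := sub_ne_zero.mpr hwx
    have hnpos : 0 < ‖w - xhat‖ := norm_pos_iff.mpr hne0
    by_contra hcon
    push_neg at hcon
    set c := -⟪F xhat, w - xhat⟫ with hc
    have hcpos : 0 < c := by rw [hc]; linarith
    set t := min 1 (c / (2 * L * ‖w - xhat‖ ^ 2)) with ht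
    have hdenpos : 0 < 2 * L * ‖w - xhat‖ ^ 2 := by positivity
    have ht0 : 0 < t := lt_min one_pos (div_pos hcpos hdenpos)
    have ht1 : t ≤ 1 := min_le_left _ _
    have htc : t ≤ c / (2 * L * ‖w - xhat‖ ^ 2) := min_le_right _ _
    set s := xhat + t • (w - xhat) with hs
    have hsC : s ∈ C := by
      have hcomb := hconv hmem hw (by linarith : (0:ℝ) ≤ 1 - t) ht0.le (by ring)
      have heq : (1 - t) • xhat + t • w = s := by
        rw [hs, smul_sub, sub_smul, one_smul]; abel
      rwa [heq] at hcomb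
    have h0 : 0 ≤ ⟪F s, s - xhat⟫ := key s hsC
    have hsx : s - xhat = t • (w - xhat) := by rw [hs]; abel
    have h1 : 0 ≤ ⟪F s, w - xhat⟫ := by
      rw [hsx, real_inner_smul_right] at h0
      nlinarith
    have h2 : ⟪F s - F xhat, w - xhat⟫ ≤ L * t * ‖w - xhat‖ ^ 2 := by
      have ha := real_inner_le_norm (F s - F xhat) (w - xhat)
      have hb : ‖F s - F xhat‖ ≤ L * (t * ‖w - xhat‖) := by
        calc ‖F s - F xhat‖ ≤ L * ‖s - xhat‖ := hLip s xhat
          _ = L * (t * ‖w - xhat‖) := by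
            rw [hsx, norm_smul, Real.norm_eq_abs, abs_of_pos ht0]
      calc ⟪F s - F xhat, w - xhat⟫ ≤ ‖F s - F xhat‖ * ‖w - xhat‖ := ha
        _ ≤ L * (t * ‖w - xhat‖) * ‖w - xhat‖ :=
          mul_le_mul_of_nonneg_right hb (norm_nonneg _)
        _ = L * t * ‖w - xhat‖ ^ 2 := by ring
    rw [inner_sub_left] at h2
    -- ⟪F xhat, w - xhat⟫ ≥ ⟪F s, w-xhat⟫ - L t ‖w-xhat‖² ≥ -c/2 > -c
    have h3 : L * t * ‖w - xhat‖ ^ 2 ≤ c / 2 := by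
      have h4 := mul_le_mul_of_nonneg_left htc hdenpos.le
      rw [mul_div_cancel₀ _ (ne_of_gt hdenpos)] at h4
      have h5 : 2 * (L * t * ‖w - xhat‖ ^ 2) = 2 * L * ‖w - xhat‖ ^ 2 * t := by ring
      linarith
    nlinarith
end
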